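/- The four polynomials 1, x₁ − x₂, x₁ − x₃, and (x₁ − x₂)(x₁ − x₃) form a basis of the vector space of polynomials p ∈ ℂ[x₁,x₂,x₃] satisfying ∂₂²p = 0, ∂₃²p = 0, and (∂₁ + ∂₂ + ∂₃)p = 0. In particular, this solution space has dimension 4. -/

import Mathlib

open MvPolynomial

lemma coeff_pderiv (i : Fin 3) (n : Fin 3 →₀ ℕ) (p : MvPolynomial (Fin 3) ℂ) :
    coeff n (pderiv i p) = (n i + 1 : ℂ) * coeff (n + Finsupp.single i 1) p := by
  induction p using MvPolynomial.induction_on' with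
  | monomial s a =>
    rw [pderiv_monomial]
    rcases Nat.eq_zero_or_pos (s i) with h | h
    · have h1 : s ≠ n + Finsupp.single i 1 := by
        intro he; rw [he] at h; simp at h
      simp [coeff_monomial, h, h1]
    · have key : (s - Finsupp.single i 1 = n) ↔ (s = n + Finsupp.single i 1) := by
        constructor
        · intro he
          ext j
          rcases eq_or_ne j i with rfl | hj
          · have := Finsupp.ext_iff.mp he j
            simp at this
            simp only [Finsupp.add_apply, Finsupp.single_eq_same]
            omega
          · have := Finsupp.ext_iff.mp he j
            simp [Finsupp.single_apply, hj.symm] at this ⊢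
            omega
        · intro he; subst he; ext j; rcases eq_or_ne j i with rfl | hj <;>
            simp [Finsupp.single_apply, *]
      rcases eq_or_ne (s - Finsupp.single i 1) n with he | he
      · have he2 := key.mp he
        have : s i = n i + 1 := by subst he2; simp
        simp [coeff_monomial, he, he2, this]
        ring
      · have he2 : s ≠ n + Finsupp.single i 1 := fun h' => he (key.mpr h')
        simp [coeff_monomial, he, he2]
  | add p q hp hq => simp [hp, hq]; ring

lemma coeff_eq_zero_of_pderiv (i : Fin 3) (p : MvPolynomial (Fin 3) ℂ)
    (h : pderiv i p = 0) (m : Fin 3 →₀ ℕ) (hm : 1 ≤ m i) : coeff m p = 0 := by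
  set n := m - Finsupp.single i 1 with hn
  have hmn : m = n + Finsupp.single i 1 := by
    ext j; rcases eq_or_ne j i with rfl | hj
    · simp [hn]; omega
    · simp [hn, Finsupp.single_apply, Ne.symm hj]
  have h2 := coeff_pderiv i n p
  rw [h, ← hmn] at h2
  have h0 : ((n i : ℂ) + 1) * coeff m p = 0 := by simpa using h2.symm
  exact (mul_eq_zero.mp h0).resolve_left (Nat.cast_add_one_ne_zero _)

lemma coeff_eq_zero_of_pderiv2 (i : Fin 3) (p : MvPolynomial (Fin 3) ℂ)
    (h : pderiv i (pderiv i p) = 0) (m : Fin 3 →₀ ℕ) (hm : 2 ≤ m i) : coeff m p = 0 := by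
  set n := m - Finsupp.single i 1 with hn
  have hmn : m = n + Finsupp.single i 1 := by
    ext j; rcases eq_or_ne j i with rfl | hj
    · simp [hn]; omega
    · simp [hn, Finsupp.single_apply, Ne.symm hj]
  have hni : 1 ≤ n i := by
    have := Finsupp.ext_iff.mp hmn i; simp at this; omega
  have h1 : coeff n (pderiv i p) = 0 :=
    coeff_eq_zero_of_pderiv i _ h n hni
  rw [coeff_pderiv, ← hmn] at h1
  exact (mul_eq_zero.mp h1).resolve_left (Nat.cast_add_one_ne_zero _)

lemma structural (q : MvPolynomial (Fin 3) ℂ)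
    (h0 : pderiv 0 q = 0)
    (h1 : pderiv 1 (pderiv 1 q) = 0)
    (h2 : pderiv 2 (pderiv 2 q) = 0) :
    q ∈ Submodule.span ℂ
      (Set.range ![(1 : MvPolynomial (Fin 3) ℂ), X 1, X 2, X 1 * X 2]) := by
  rw [← support_sum_monomial_coeff q]
  apply Submodule.sum_mem
  intro m hm
  have hm0 : m 0 = 0 := by
    by_contra h
    exact (MvPolynomial.mem_support_iff.mp hm) (coeff_eq_zero_of_pderiv 0 q h0 m (by omega))
  have hm1 : m 1 ≤ 1 := by
    by_contra h
    exact (MvPolynomial.mem_support_iff.mp hm) (coeff_eq_zero_of_pderiv2 1 q h1 m (by omega))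
  have hm2 : m 2 ≤ 1 := by
    by_contra h
    exact (MvPolynomial.mem_support_iff.mp hm) (coeff_eq_zero_of_pderiv2 2 q h2 m (by omega))
  have hmono : monomial m (coeff m q) =
      coeff m q • (X 0 ^ m 0 * X 1 ^ m 1 * X 2 ^ m 2 : MvPolynomial (Fin 3) ℂ) := by
    rw [monomial_eq, smul_eq_C_mul]
    congr 1
    rw [Finsupp.prod_fintype _ _ (fun i => pow_zero (X i))]
    exact Fin.prod_univ_three _
  rw [hmono, hm0, pow_zero, one_mul]
  apply Submodule.smul_mem
  apply Submodule.subset_span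
  interval_cases h1 : m 1 <;> interval_cases h2 : m 2 <;> simp

noncomputable def σ : MvPolynomial (Fin 3) ℂ →ₐ[ℂ] MvPolynomial (Fin 3) ℂ :=
  aeval ![X 0, X 0 - X 1, X 0 - X 2]

lemma σ_X0 : σ (X 0) = X 0 := by simp [σ]
lemma σ_X1 : σ (X 1) = X 0 - X 1 := by simp [σ]
lemma σ_X2 : σ (X 2) = X 0 - X 2 := by simp [σ]

lemma σ_invol (p : MvPolynomial (Fin 3) ℂ) : σ (σ p) = p := by
  have : σ.comp σ = AlgHom.id ℂ _ := by
    apply MvPolynomial.algHom_ext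
    intro i
    fin_cases i <;> simp [σ]
  calc σ (σ p) = (σ.comp σ) p := rfl
    _ = p := by rw [this]; rfl

lemma pderiv0_σ (p : MvPolynomial (Fin 3) ℂ) :
    pderiv 0 (σ p) = σ (pderiv 0 p + pderiv 1 p + pderiv 2 p) := by
  induction p using MvPolynomial.induction_on with
  | C a => simp
  | add p q hp hq => simp only [map_add, hp, hq]; ring
  | mul_X p n ih =>
    fin_cases n <;>
      simp only [map_mul, pderiv_mul, map_add, ih, σ_X0, σ_X1, σ_X2,
        map_sub, map_one, pderiv_one] <;>
      · simp [σ_X0, σ_X1, σ_X2, pderiv_X, Pi.single_apply]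
        try ring

lemma pderiv1_σ (p : MvPolynomial (Fin 3) ℂ) :
    pderiv 1 (σ p) = - σ (pderiv 1 p) := by
  induction p using MvPolynomial.induction_on with
  | C a => simp
  | add p q hp hq => simp only [map_add, hp, hq]; ring
  | mul_X p n ih =>
    fin_cases n <;>
      simp only [map_mul, pderiv_mul, map_add, ih, σ_X0, σ_X1, σ_X2,
        map_sub, map_one, pderiv_one] <;>
      · simp [σ_X0, σ_X1, σ_X2, pderiv_X, Pi.single_apply]
        try ring

lemma pderiv2_σ (p : MvPolynomial (Fin 3) ℂ) :
    pderiv 2 (σ p) = - σ (pderiv 2 p) := by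
  induction p using MvPolynomial.induction_on with
  | C a => simp
  | add p q hp hq => simp only [map_add, hp, hq]; ring
  | mul_X p n ih =>
    fin_cases n <;>
      simp only [map_mul, pderiv_mul, map_add, ih, σ_X0, σ_X1, σ_X2,
        map_sub, map_one, pderiv_one] <;>
      · simp [σ_X0, σ_X1, σ_X2, pderiv_X, Pi.single_apply]
        try ring

/-- The four polynomials `1, x₁−x₂, x₁−x₃, (x₁−x₂)(x₁−x₃)` are a basis of the space of
solutions `p ∈ ℂ[x₁,x₂,x₃]` of `∂₂²p = 0`, `∂₃²p = 0`, `(∂₁+∂₂+∂₃)p = 0`: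
they are linearly independent, each satisfies the equations, and every solution lies in
their span. In particular the solution space has dimension 4. -/
theorem orthogonal_complement_basis :
    LinearIndependent ℂ
      ![(1 : MvPolynomial (Fin 3) ℂ), X 0 - X 1, X 0 - X 2, (X 0 - X 1) * (X 0 - X 2)] ∧
    (∀ i : Fin 4,
      pderiv 1 (pderiv 1
        (![(1 : MvPolynomial (Fin 3) ℂ), X 0 - X 1, X 0 - X 2,
            (X 0 - X 1) * (X 0 - X 2)] i)) = 0 ∧
      pderiv 2 (pderiv 2
        (![(1 : MvPolynomial (Fin 3) ℂ), X 0 - X 1, X 0 - X 2,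
            (X 0 - X 1) * (X 0 - X 2)] i)) = 0 ∧
      pderiv 0 (![(1 : MvPolynomial (Fin 3) ℂ), X 0 - X 1, X 0 - X 2,
            (X 0 - X 1) * (X 0 - X 2)] i)
        + pderiv 1 (![(1 : MvPolynomial (Fin 3) ℂ), X 0 - X 1, X 0 - X 2,
            (X 0 - X 1) * (X 0 - X 2)] i)
        + pderiv 2 (![(1 : MvPolynomial (Fin 3) ℂ), X 0 - X 1, X 0 - X 2,
            (X 0 - X 1) * (X 0 - X 2)] i) = 0) ∧
    (∀ p : MvPolynomial (Fin 3) ℂ,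
      pderiv 1 (pderiv 1 p) = 0 → pderiv 2 (pderiv 2 p) = 0 →
      pderiv 0 p + pderiv 1 p + pderiv 2 p = 0 →
      p ∈ Submodule.span ℂ
        (Set.range ![(1 : MvPolynomial (Fin 3) ℂ), X 0 - X 1, X 0 - X 2,
          (X 0 - X 1) * (X 0 - X 2)])) := by
  refine ⟨?_, ?_, ?_⟩
  · rw [Fintype.linearIndependent_iff]
    intro g hg
    rw [Fin.sum_univ_four] at hg
    simp only [Matrix.cons_val_zero, Matrix.cons_val_one, Matrix.head_cons,
      Matrix.cons_val_two, Matrix.tail_cons, Matrix.cons_val_three] at hg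
    have e : ∀ x : Fin 3 → ℂ,
        g 0 * 1 + g 1 * (x 0 - x 1) + g 2 * (x 0 - x 2)
          + g 3 * ((x 0 - x 1) * (x 0 - x 2)) = 0 := by
      intro x
      have := congrArg (eval x) hg
      simpa [smul_eval] using this
    have e1 := e ![0, 0, 0]
    have e2 := e ![0, -1, 0]
    have e3 := e ![0, 0, -1]
    have e4 := e ![0, -1, -1]
    simp at e1 e2 e3 e4
    intro i
    fin_cases i
    · simpa using e1
    · show g 1 = 0; linear_combination e2 - e1
    · show g 2 = 0; linear_combination e3 - e1
    · show g 3 = 0; linear_combination e4 - e2 - e3 + e1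
  · intro i
    fin_cases i <;>
      refine ⟨?_, ?_, ?_⟩ <;>
      · simp [pderiv_mul, pderiv_X, Pi.single_apply]
        try ring
  · intro p h1 h2 h0
    have hq0 : pderiv 0 (σ p) = 0 := by rw [pderiv0_σ, h0, map_zero]
    have hq1 : pderiv 1 (pderiv 1 (σ p)) = 0 := by
      rw [pderiv1_σ, map_neg, pderiv1_σ, neg_neg, h1, map_zero]
    have hq2 : pderiv 2 (pderiv 2 (σ p)) = 0 := by
      rw [pderiv2_σ, map_neg, pderiv2_σ, neg_neg, h2, map_zero]
    have hq := structural (σ p) hq0 hq1 hq2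
    have hmap : p ∈ Submodule.map σ.toLinearMap
        (Submodule.span ℂ (Set.range ![(1 : MvPolynomial (Fin 3) ℂ), X 1, X 2, X 1 * X 2])) :=
      ⟨σ p, hq, σ_invol p⟩
    rw [Submodule.map_span] at hmap
    refine Submodule.span_mono ?_ hmap
    rintro _ ⟨_, ⟨i, rfl⟩, rfl⟩
    fin_cases i
    · exact ⟨0, by simp⟩
    · exact ⟨1, by simp [σ_X1]⟩
    · exact ⟨2, by simp [σ_X2]⟩
    · exact ⟨3, by simp [σ_X1, σ_X2]⟩
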